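/- If in an election with an odd number n of voters a candidate c is, for each other candidate e, preferred by at least (n-1)/2 voters, and the sum over all other candidates e of the deficits max(0, (n+1)/2 − N(c,e)) equals s, then the Dodgson score of c is at most the total number of switches obtained by, for each deficient candidate e, moving c above e in enough voters — in particular, if every other candidate is adjacent and directly above c in some voter where c needs the vote, the Dodgson score of c is exactly s. -/

import Mathlib

/-- A voter's preference order is a list of candidates in *increasing* order of
preference (the head is the least preferred, the last element the most preferred).
`prefers v x y` means voter `v` strictly prefers `x` to `y`. -/
def prefers {α : Type*} [DecidableEq α] (v : List α) (x y : α) : Prop :=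
  v.idxOf y < v.idxOf x

/-- The number of voters in the profile `V` preferring `x` to `y`. -/
def numPrefer {α : Type*} [DecidableEq α] (V : List (List α)) (x y : α) : ℕ :=
  (V.filter (fun v => decide (v.idxOf y < v.idxOf x))).length

/-- `c` is a Condorcet winner: strictly more than half of the voters prefer `c`
to each other candidate. -/
def CondorcetWinner {α : Type*} [DecidableEq α] (C : Finset α) (V : List (List α))
    (c : α) : Prop :=
  c ∈ C ∧ ∀ d ∈ C, d ≠ c → V.length < 2 * numPrefer V c d

/-- One switch in a single preference order: exchange two adjacent candidates. -/
def SwitchVoter {α : Type*} (v w : List α) : Prop :=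
  ∃ (l r : List α) (x y : α), v = l ++ x :: y :: r ∧ w = l ++ y :: x :: r

/-- One switch in a profile: exchange two adjacent candidates in one voter's order. -/
def SwitchProfile {α : Type*} (V W : List (List α)) : Prop :=
  ∃ (P Q : List (List α)) (v w : List α),
    V = P ++ v :: Q ∧ W = P ++ w :: Q ∧ SwitchVoter v w

/-- `Reach R k a b`: `b` is reachable from `a` in exactly `k` `R`-steps. -/
def Reach {β : Type*} (R : β → β → Prop) : ℕ → β → β → Prop
  | 0, a, b => a = b
  | k + 1, a, b => ∃ m, R a m ∧ Reach R k m b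

/-- The Dodgson score of candidate `c`: the minimum number of switches needed to
make `c` a Condorcet winner. -/
noncomputable def DodgsonScore {α : Type*} [DecidableEq α] (C : Finset α)
    (V : List (List α)) (c : α) : ℕ :=
  sInf {k | ∃ W, Reach SwitchProfile k V W ∧ CondorcetWinner C W c}

/-- `v` is a valid preference order on the candidate set `C`. -/
def IsVoter {α : Type*} [DecidableEq α] (C : Finset α) (v : List α) : Prop :=
  v.Nodup ∧ ∀ x, x ∈ v ↔ x ∈ C


section DodgsonHelpers

variable {α : Type*} [DecidableEq α]

lemma numPrefer_append (P Q : List (List α)) (a b : α) :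
    numPrefer (P ++ Q) a b = numPrefer P a b + numPrefer Q a b := by
  simp [numPrefer, List.filter_append]

lemma numPrefer_cons (v : List α) (Q : List (List α)) (a b : α) :
    numPrefer (v :: Q) a b = (if v.idxOf b < v.idxOf a then 1 else 0) + numPrefer Q a b := by
  simp only [numPrefer, List.filter_cons]
  split <;> simp_all <;> omega

lemma not_mem_left_of_nodup {l t : List α} {a : α} (h : (l ++ a :: t).Nodup) : a ∉ l := by
  rw [List.nodup_append] at h
  exact fun hm => h.2.2 a hm a List.mem_cons_self rfl
lemma idx_self (l t : List α) (x : α) (hx : x ∉ l) :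
    (l ++ x :: t).idxOf x = l.length := by
  rw [List.idxOf_append_of_notMem hx, List.idxOf_cons_self]; omega

lemma idx_snd (l t : List α) (x y : α) (hy : y ∉ l) (hxy : x ≠ y) :
    (l ++ x :: y :: t).idxOf y = l.length + 1 := by
  rw [List.idxOf_append_of_notMem hy, List.idxOf_cons_ne _ hxy, List.idxOf_cons_self]

lemma idx_other (l r : List α) (x y b : α) (hb : b ≠ x) (hb' : b ≠ y) :
    (l ++ x :: y :: r).idxOf b = (l ++ y :: x :: r).idxOf b ∧
    ((l ++ x :: y :: r).idxOf b < l.length ∨ l.length + 2 ≤ (l ++ x :: y :: r).idxOf b) := by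
  by_cases hbl : b ∈ l
  · rw [List.idxOf_append_of_mem hbl, List.idxOf_append_of_mem hbl]
    exact ⟨rfl, Or.inl (List.idxOf_lt_length_iff.2 hbl)⟩
  · rw [List.idxOf_append_of_notMem hbl, List.idxOf_append_of_notMem hbl,
      List.idxOf_cons_ne _ (Ne.symm hb), List.idxOf_cons_ne _ (Ne.symm hb'),
      List.idxOf_cons_ne _ (Ne.symm hb'), List.idxOf_cons_ne _ (Ne.symm hb)]
    omega

lemma swap_lt_iff (l r : List α) (x y a b : α)
    (hx : x ∉ l) (hy : y ∉ l) (hxy : x ≠ y)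
    (h1 : ¬(a = x ∧ b = y)) (h2 : ¬(a = y ∧ b = x)) :
    ((l ++ y :: x :: r).idxOf b < (l ++ y :: x :: r).idxOf a ↔
     (l ++ x :: y :: r).idxOf b < (l ++ x :: y :: r).idxOf a) := by
  have vx := idx_self l (y :: r) x hx
  have vy := idx_snd l r x y hy hxy
  have wy := idx_self l (x :: r) y hy
  have wx := idx_snd l r y x hx (Ne.symm hxy)
  by_cases hax : a = x
  · by_cases hbx : b = x
    · rw [hax, hbx]; omega
    · by_cases hby : b = y
      · exact absurd ⟨hax, hby⟩ h1
      · obtain ⟨e1, e2⟩ := idx_other l r x y b hbx hby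
        rw [hax]; omega
  · by_cases hay : a = y
    · by_cases hbx : b = x
      · exact absurd ⟨hay, hbx⟩ h2
      · by_cases hby : b = y
        · rw [hay, hby]; omega
        · obtain ⟨e1, e2⟩ := idx_other l r x y b hbx hby
          rw [hay]; omega
    · obtain ⟨f1, f2⟩ := idx_other l r x y a hax hay
      by_cases hbx : b = x
      · rw [hbx]; omega
      · by_cases hby : b = y
        · rw [hby]; omega
        · obtain ⟨e1, e2⟩ := idx_other l r x y b hbx hby
          omega

lemma nodup_parts {l r : List α} {x y : α} (h : (l ++ x :: y :: r).Nodup) :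
    x ∉ l ∧ y ∉ l ∧ x ≠ y := by
  refine ⟨not_mem_left_of_nodup h, ?_, ?_⟩
  · have h' : ((l ++ [x]) ++ y :: r).Nodup := by simpa using h
    intro hm; exact not_mem_left_of_nodup h' (by simp [hm])
  · rw [List.nodup_append] at h
    have := h.2.1
    simp only [List.nodup_cons] at this
    exact fun hxy => this.1 (by simp [hxy])

lemma switch_counts (P Q : List (List α)) (l r : List α) (x y : α)
    (hx : x ∉ l) (hy : y ∉ l) (hxy : x ≠ y) :
    (∀ a b : α, ¬(a = x ∧ b = y) → ¬(a = y ∧ b = x) →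
      numPrefer (P ++ (l ++ y :: x :: r) :: Q) a b = numPrefer (P ++ (l ++ x :: y :: r) :: Q) a b)
    ∧ numPrefer (P ++ (l ++ y :: x :: r) :: Q) x y
        = numPrefer (P ++ (l ++ x :: y :: r) :: Q) x y + 1
    ∧ ∀ a b : α, numPrefer (P ++ (l ++ y :: x :: r) :: Q) a b
        ≤ numPrefer (P ++ (l ++ x :: y :: r) :: Q) a b + 1 := by
  have vx := idx_self l (y :: r) x hx
  have vy := idx_snd l r x y hy hxy
  have wy := idx_self l (x :: r) y hy
  have wx := idx_snd l r y x hx (Ne.symm hxy)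
  refine ⟨fun a b h1 h2 => ?_, ?_, fun a b => ?_⟩
  · rw [numPrefer_append, numPrefer_append, numPrefer_cons, numPrefer_cons]
    rw [if_congr (swap_lt_iff l r x y a b hx hy hxy h1 h2) rfl rfl]
  · rw [numPrefer_append, numPrefer_append, numPrefer_cons, numPrefer_cons]
    rw [if_pos (by omega : (l ++ y :: x :: r).idxOf y < (l ++ y :: x :: r).idxOf x),
      if_neg (by omega : ¬ (l ++ x :: y :: r).idxOf y < (l ++ x :: y :: r).idxOf x)]
    omega
  · rw [numPrefer_append, numPrefer_append, numPrefer_cons, numPrefer_cons]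
    split <;> split <;> omega

lemma switch_facts {V W : List (List α)} (h : SwitchProfile V W) (hnd : ∀ v ∈ V, v.Nodup) :
    (∀ v ∈ W, v.Nodup) ∧ W.length = V.length ∧
    ∃ x y : α, x ≠ y ∧
      (∀ a b : α, ¬(a = x ∧ b = y) → ¬(a = y ∧ b = x) →
        numPrefer W a b = numPrefer V a b) ∧
      (∀ a b : α, numPrefer W a b ≤ numPrefer V a b + 1) := by
  obtain ⟨P, Q, v, w, rfl, rfl, l, r, x, y, rfl, rfl⟩ := h
  have hv : (l ++ x :: y :: r).Nodup := hnd _ (by simp)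
  obtain ⟨hx, hy, hxy⟩ := nodup_parts hv
  obtain ⟨heq, _, hle⟩ := switch_counts P Q l r x y hx hy hxy
  refine ⟨?_, by simp, y, x, Ne.symm hxy, fun a b h1 h2 => heq a b ?_ ?_, hle⟩
  · intro u hu
    rcases List.mem_append.1 hu with h' | h'
    · exact hnd u (by simp [h'])
    · rcases List.mem_cons.1 h' with rfl | h'
      · have : (l ++ x :: y :: r).Perm (l ++ y :: x :: r) :=
          List.Perm.append_left l (List.Perm.swap y x r)
        exact this.nodup_iff.1 hv
      · exact hnd u (by simp [h'])
  · tauto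
  · tauto

lemma sum_step (S : Finset α) (t : ℕ) (f g : α → ℕ) (e₀ : α)
    (h1 : ∀ e ∈ S, e ≠ e₀ → g e = f e) (h2 : g e₀ ≤ f e₀ + 1) :
    ∑ e ∈ S, (t - f e) ≤ 1 + ∑ e ∈ S, (t - g e) := by
  by_cases h : e₀ ∈ S
  · rw [← Finset.add_sum_erase _ _ h, ← Finset.add_sum_erase _ (fun e => t - g e) h]
    have he : ∑ e ∈ S.erase e₀, (t - f e) = ∑ e ∈ S.erase e₀, (t - g e) :=
      Finset.sum_congr rfl fun e he => by
        rw [h1 e (Finset.mem_of_mem_erase he) (Finset.ne_of_mem_erase he)]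
    omega
  · have he : ∑ e ∈ S, (t - f e) = ∑ e ∈ S, (t - g e) :=
      Finset.sum_congr rfl fun e he => by
        rw [h1 e he (fun hh => h (hh ▸ he))]
    omega

lemma reach_sum_le (c : α) (S : Finset α) (t : ℕ) :
    ∀ (k : ℕ) (V W : List (List α)), Reach SwitchProfile k V W → (∀ v ∈ V, v.Nodup) →
      W.length = V.length ∧
      ∑ e ∈ S, (t - numPrefer V c e) ≤ k + ∑ e ∈ S, (t - numPrefer W c e) := by
  intro k
  induction k with
  | zero => rintro V W rfl _; exact ⟨rfl, by omega⟩
  | succ k ih =>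
    rintro V W ⟨M, hVM, hMW⟩ hnd
    obtain ⟨hndM, hlen, x, y, hxy, heq, hle⟩ := switch_facts hVM hnd
    obtain ⟨hlen2, hsum⟩ := ih M W hMW hndM
    refine ⟨hlen2.trans hlen, ?_⟩
    by_cases hcx : c = x
    · have step := sum_step S t (fun e => numPrefer V c e) (fun e => numPrefer M c e) y
        (fun e _ he => heq c e (fun h => he h.2) (fun h => hxy (hcx ▸ h.1))) (hle c y)
      beta_reduce at step; omega
    · by_cases hcy : c = y
      · have step := sum_step S t (fun e => numPrefer V c e) (fun e => numPrefer M c e) x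
          (fun e _ he => heq c e (fun h => hcx h.1) (fun h => he h.2)) (hle c x)
        beta_reduce at step; omega
      · have step : ∑ e ∈ S, (t - numPrefer V c e) = ∑ e ∈ S, (t - numPrefer M c e) :=
          Finset.sum_congr rfl fun e _ => by
            rw [heq c e (fun h => hcx h.1) (fun h => hcy h.1)]
        beta_reduce at step; omega

/-- If two "c directly below e" patterns give the same nodup list, the successors agree. -/
lemma succ_unique {l l' r r' : List α} {c e e' : α}
    (h : l' ++ c :: e' :: r' = l ++ c :: e :: r) (hnd : (l ++ c :: e :: r).Nodup) :
    e' = e := by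
  have hcl : c ∉ l := (nodup_parts hnd).1
  have hcl' : c ∉ l' := (nodup_parts (h ▸ hnd)).1
  have h1 : (l' ++ c :: e' :: r').idxOf c = l'.length := idx_self _ _ _ hcl'
  have h2 : (l ++ c :: e :: r).idxOf c = l.length := idx_self _ _ _ hcl
  have hlen : l'.length = l.length := by rw [← h1, ← h2, h]
  obtain ⟨-, h4⟩ := List.append_inj h hlen
  simp only [List.cons.injEq] at h4
  exact h4.2.1

lemma ub (c : α) (D : Finset α) : ∀ (V : List (List α)), (∀ v ∈ V, v.Nodup) →
    (∀ e ∈ D, e ≠ c ∧ ∃ l r : List α, l ++ c :: e :: r ∈ V) →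
    ∃ W, Reach SwitchProfile D.card V W ∧
      (∀ e, numPrefer V c e ≤ numPrefer W c e) ∧
      (∀ e ∈ D, numPrefer V c e + 1 ≤ numPrefer W c e) ∧
      W.length = V.length := by
  induction D using Finset.induction_on with
  | empty => intro V h1 _; exact ⟨V, rfl, fun e => le_rfl, by simp, rfl⟩
  | @insert e₀ D' he₀ ih =>
    intro V hnd hw
    obtain ⟨hne, l, r, hv⟩ := hw e₀ (Finset.mem_insert_self _ _)
    obtain ⟨P, Q, rfl⟩ := List.append_of_mem hv
    have hndv : (l ++ c :: e₀ :: r).Nodup := hnd _ hv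
    obtain ⟨hcl, hel, hce⟩ := nodup_parts hndv
    set v := l ++ c :: e₀ :: r with hvdef
    set w := l ++ e₀ :: c :: r with hwdef
    have hstep : SwitchProfile (P ++ v :: Q) (P ++ w :: Q) :=
      ⟨P, Q, v, w, rfl, rfl, l, r, c, e₀, rfl, rfl⟩
    have hnd1 : ∀ u ∈ P ++ w :: Q, u.Nodup := (switch_facts hstep hnd).1
    obtain ⟨heq, hinc, _⟩ := switch_counts P Q l r c e₀ hcl hel hce
    rw [← hvdef, ← hwdef] at heq hinc
    have hwit : ∀ e ∈ D', e ≠ c ∧ ∃ l' r' : List α, l' ++ c :: e :: r' ∈ P ++ w :: Q := by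
      intro e he
      obtain ⟨hec, l', r', hv'⟩ := hw e (Finset.mem_insert_of_mem he)
      refine ⟨hec, l', r', ?_⟩
      have hne' : l' ++ c :: e :: r' ≠ v := by
        intro hh
        exact absurd (succ_unique hh hndv) (fun h => he₀ (h ▸ he))
      rcases List.mem_append.1 hv' with h' | h'
      · exact List.mem_append.2 (Or.inl h')
      · rcases List.mem_cons.1 h' with h' | h'
        · exact absurd h' hne'
        · exact List.mem_append.2 (Or.inr (List.mem_cons_of_mem _ h'))
    obtain ⟨W, hreach, hmono, hstrict, hlen⟩ := ih (P ++ w :: Q) hnd1 hwit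
    have hcount : ∀ e, e ≠ e₀ → numPrefer (P ++ w :: Q) c e = numPrefer (P ++ v :: Q) c e :=
      fun e he => heq c e (fun h => he h.2) (fun h => hce h.1)
    refine ⟨W, ?_, ?_, ?_, ?_⟩
    · rw [Finset.card_insert_of_notMem he₀]
      exact ⟨P ++ w :: Q, hstep, hreach⟩
    · intro e
      by_cases he : e = e₀
      · subst he; have h1 := hmono e; omega
      · rw [← hcount e he]; exact hmono e
    · intro e he
      rcases Finset.mem_insert.1 he with rfl | he'
      · have h1 := hmono e; omega
      · have h1 := hcount e (fun h => he₀ (h ▸ he'))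
        have h2 := hstrict e he'
        omega
    · simpa using hlen

end DodgsonHelpers

/-- Suppose the number `n` of voters is odd, each other candidate
`e` is preferred to `c` by at least `(n-1)/2` voters (i.e. `n ≤ 2·N(c,e) + 1`),
and every candidate against whom `c` still needs a vote (`2·N(c,e) ≤ n`) sits
directly above `c` in some voter's order. Then the Dodgson score of `c` equals
the sum of the deficits `s = ∑_{e ≠ c} max(0, (n+1)/2 − N(c,e))` (truncated
subtraction). -/
theorem dodgson_score_eq_deficit_sum {α : Type*} [DecidableEq α]
    (C : Finset α) (V : List (List α)) (c : α)
    (hV : ∀ v ∈ V, IsVoter C v) (hc : c ∈ C) (hodd : Odd V.length)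
    (hge : ∀ e ∈ C, e ≠ c → V.length ≤ 2 * numPrefer V c e + 1)
    (hadj : ∀ e ∈ C, e ≠ c → 2 * numPrefer V c e ≤ V.length →
      ∃ l r : List α, l ++ c :: e :: r ∈ V) :
    DodgsonScore C V c =
      ∑ e ∈ C.erase c, ((V.length + 1) / 2 - numPrefer V c e) := by
  obtain ⟨m, hm⟩ := hodd
  set n := V.length with hn
  have hnd : ∀ v ∈ V, v.Nodup := fun v hv => (hV v hv).1
  set D := (C.erase c).filter (fun e => 2 * numPrefer V c e ≤ n) with hD
  -- the sum equals the number of deficient candidates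
  have hsD : ∑ e ∈ C.erase c, ((n + 1) / 2 - numPrefer V c e) = D.card := by
    rw [hD, Finset.card_filter]
    refine Finset.sum_congr rfl fun e he => ?_
    have h1 := hge e (Finset.mem_of_mem_erase he) (Finset.ne_of_mem_erase he)
    split_ifs with h2 <;> omega
  -- construct the witness profile
  obtain ⟨W, hreach, hmono, hstrict, hlen⟩ := ub c D V hnd (by
    intro e he
    rw [hD, Finset.mem_filter] at he
    exact ⟨Finset.ne_of_mem_erase he.1,
      hadj e (Finset.mem_of_mem_erase he.1) (Finset.ne_of_mem_erase he.1) he.2⟩)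
  have hwin : CondorcetWinner C W c := by
    refine ⟨hc, fun d hd hdc => ?_⟩
    rw [hlen]
    have h1 := hge d hd hdc
    by_cases h2 : 2 * numPrefer V c d ≤ n
    · have h3 := hstrict d (by rw [hD, Finset.mem_filter]; exact ⟨Finset.mem_erase.2 ⟨hdc, hd⟩, h2⟩)
      omega
    · have h3 := hmono d
      omega
  have hmem : D.card ∈ {k | ∃ W, Reach SwitchProfile k V W ∧ CondorcetWinner C W c} :=
    ⟨W, hreach, hwin⟩
  rw [hsD]
  refine le_antisymm (Nat.sInf_le hmem) (le_csInf ⟨_, hmem⟩ ?_)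
  rintro k ⟨W', hr, hW'c, hW'⟩
  obtain ⟨hlen', hsum⟩ := reach_sum_le c (C.erase c) ((n + 1) / 2) k V W' hr hnd
  have hzero : ∑ e ∈ C.erase c, ((n + 1) / 2 - numPrefer W' c e) = 0 := by
    refine Finset.sum_eq_zero fun e he => ?_
    have h1 := hW' e (Finset.mem_of_mem_erase he) (Finset.ne_of_mem_erase he)
    rw [hlen'] at h1
    omega
  omega
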